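/- Let ε₀ ∈ (0, 1/2500), let A ≥ 2 be a real number, and let N be an integer large enough that J ≥ 10. Then for all integers 0 ≤ j < h ≤ 2J+1 one has ∏_{n=j+1}^{h} (2⁹·A³·log(N_{n−J}/Ñ_{n−1−J})) ≤ ((1−ε₀)^{j₀(j,h)} · log N)^{(7/4)(h−j)}. -/

import Mathlib

open Real

noncomputable section

/-- `J = ⌊(log log N − 4 log(10A) + 2 log ε₀)/(−log(1−ε₀))⌋`. -/
def Jdef (ε₀ A : ℝ) (N : ℕ) : ℤ :=
  ⌊(Real.log (Real.log N) - 4 * Real.log (10 * A) + 2 * Real.log ε₀) /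
      (-(Real.log (1 - ε₀)))⌋

/-- The sequence `N_j`, `−1−J ≤ j ≤ J+1`:
`N_j = N^{(1−ε₀)^{1−j}/(2−ε₀)}` for `j ≤ 1`, `N_j = N^{1−(1−ε₀)^j/(2−ε₀)}` for
`0 ≤ j ≤ J` (the formulas agree for `j = 0, 1`), and `N_{J+1} = N`. -/
def Nseq (ε₀ A : ℝ) (N : ℕ) (j : ℤ) : ℝ :=
  if j ≤ 1 then (N : ℝ) ^ ((1 - ε₀) ^ (1 - j) / (2 - ε₀))
  else if j ≤ Jdef ε₀ A N then (N : ℝ) ^ (1 - (1 - ε₀) ^ j / (2 - ε₀))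
  else (N : ℝ)

/-- `Ñ_{n−J}`: equals `N_{n−J}` for `n ≥ 1` and `1` for `n = 0`. -/
def Ntil (ε₀ A : ℝ) (N : ℕ) (n : ℕ) : ℝ :=
  if n = 0 then 1 else Nseq ε₀ A N ((n : ℤ) - Jdef ε₀ A N)

/-- `j₀(j,h) = min{|n − J − 1| : j+1 ≤ n ≤ h}`. -/
def j0 (ε₀ A : ℝ) (N : ℕ) (j h : ℕ) : ℤ :=
  sInf {m : ℤ | ∃ n : ℕ, j + 1 ≤ n ∧ n ≤ h ∧ m = |(n : ℤ) - Jdef ε₀ A N - 1|}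

lemma Nseq_pos (ε₀ A : ℝ) {N : ℕ} (hN : 0 < (N : ℝ)) (k : ℤ) : 0 < Nseq ε₀ A N k := by
  unfold Nseq
  split_ifs <;> first | exact Real.rpow_pos_of_pos hN _ | exact hN

lemma log_Nseq (ε₀ A : ℝ) {N : ℕ} (hN : 0 < (N : ℝ)) (k : ℤ) :
    Real.log (Nseq ε₀ A N k) =
      (if k ≤ 1 then (1 - ε₀) ^ (1 - k) / (2 - ε₀)
       else if k ≤ Jdef ε₀ A N then 1 - (1 - ε₀) ^ k / (2 - ε₀) else 1) * Real.log N := by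
  unfold Nseq
  split_ifs <;> simp [Real.log_rpow hN]

set_option maxHeartbeats 1000000 in
theorem product_of_logs_bound
    (ε₀ A : ℝ) (hε : 0 < ε₀) (hε' : ε₀ < 1/2500) (hA : 2 ≤ A)
    (N : ℕ) (hJ : 10 ≤ Jdef ε₀ A N)
    (j h : ℕ) (hjh : j < h) (hh : (h : ℤ) ≤ 2 * Jdef ε₀ A N + 1) :
    ∏ n ∈ Finset.Icc (j+1) h,
        (2^9 * A^3 * Real.log (Nseq ε₀ A N ((n : ℤ) - Jdef ε₀ A N) / Ntil ε₀ A N (n-1))) ≤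
      ((1 - ε₀) ^ (j0 ε₀ A N j h) * Real.log N) ^ ((7/4 : ℝ) * ((h : ℝ) - (j : ℝ))) := by
  have hε1 : ε₀ < 1 := by linarith
  have h1ε : (0:ℝ) < 1 - ε₀ := by linarith
  have h1ε1 : 1 - ε₀ < 1 := by linarith
  have h2ε : (1:ℝ) ≤ 2 - ε₀ := by linarith
  have h1εne : (1 - ε₀) ≠ 0 := ne_of_gt h1ε
  have hlog1ε : Real.log (1 - ε₀) < 0 := Real.log_neg h1ε h1ε1
  have hden : 0 < -(Real.log (1 - ε₀)) := by linarith
  have hA0 : (0:ℝ) < 10 * A := by linarith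
  have hlog10A : 0 < Real.log (10 * A) := Real.log_pos (by linarith)
  have hlogε : Real.log ε₀ < 0 := Real.log_neg hε (by linarith)
  have hJR : (10:ℝ) ≤ (Jdef ε₀ A N : ℝ) := by exact_mod_cast hJ
  have hfloor : ((Jdef ε₀ A N : ℤ) : ℝ) ≤
      (Real.log (Real.log N) - 4 * Real.log (10 * A) + 2 * Real.log ε₀) /
        (-(Real.log (1 - ε₀))) := by
    unfold Jdef; exact Int.floor_le _
  have hkey : 4 * Real.log (10 * A) - 2 * Real.log ε₀ ≤
      (Jdef ε₀ A N : ℝ) * Real.log (1 - ε₀) + Real.log (Real.log N) := by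
    have h2 := (le_div_iff₀ hden).mp hfloor
    rw [mul_neg] at h2
    linarith
  have hJlogneg : (Jdef ε₀ A N : ℝ) * Real.log (1 - ε₀) < 0 :=
    mul_neg_of_pos_of_neg (by linarith) hlog1ε
  have hloglogN : 0 < Real.log (Real.log N) := by linarith
  have hLnn : 0 ≤ Real.log N := by
    rcases Nat.eq_zero_or_pos N with hz | hpos
    · simp [hz]
    · exact Real.log_nonneg (by exact_mod_cast hpos)
  have hL1 : 1 < Real.log N := by
    by_contra hle
    push_neg at hle
    exact absurd (Real.log_nonpos hLnn hle) (by linarith)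
  have hL0 : 0 < Real.log N := by linarith
  have hN1 : 1 < (N : ℝ) := by
    by_contra hle
    push_neg at hle
    exact absurd (Real.log_nonpos (by positivity) hle) (by linarith)
  have hN0 : 0 < (N : ℝ) := by linarith
  set J : ℤ := Jdef ε₀ A N with hJd
  set L : ℝ := Real.log N with hLd
  -- key lower bound : (1-ε₀)^J * L ≥ (10A)^4 / ε₀^2
  have hRHSpos : 0 < (1 - ε₀) ^ J * L := mul_pos (zpow_pos h1ε J) hL0
  have hB : (10 * A) ^ 4 / ε₀ ^ 2 ≤ (1 - ε₀) ^ J * L := by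
    have hlogineq : Real.log ((10 * A) ^ 4 / ε₀ ^ 2) ≤ Real.log ((1 - ε₀) ^ J * L) := by
      rw [Real.log_div (by positivity) (by positivity),
        Real.log_mul (zpow_ne_zero J h1εne) (ne_of_gt hL0),
        Real.log_pow, Real.log_pow, Real.log_zpow]
      push_cast
      linarith [hkey]
    exact (Real.log_le_log_iff (by positivity) hRHSpos).mp hlogineq
  -- facts about j0
  have hSmem : ∀ (n : ℕ), j + 1 ≤ n → n ≤ h →
      (|(n : ℤ) - J - 1|) ∈ {m : ℤ | ∃ n : ℕ, j + 1 ≤ n ∧ n ≤ h ∧ m = |(n : ℤ) - Jdef ε₀ A N - 1|} :=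
    fun n h1 h2 => ⟨n, h1, h2, by rw [hJd]⟩
  have hSbdd : BddBelow {m : ℤ | ∃ n : ℕ, j + 1 ≤ n ∧ n ≤ h ∧ m = |(n : ℤ) - Jdef ε₀ A N - 1|} :=
    ⟨0, fun m ⟨n, _, _, hm⟩ => hm ▸ abs_nonneg _⟩
  have hj0le : ∀ (n : ℕ), j + 1 ≤ n → n ≤ h → j0 ε₀ A N j h ≤ |(n : ℤ) - J - 1| :=
    fun n h1 h2 => csInf_le hSbdd (hSmem n h1 h2)
  have hj0J : j0 ε₀ A N j h ≤ J := by
    refine le_trans (hj0le (j+1) le_rfl hjh) ?_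
    have h1 : ((j:ℤ)+1) ≤ 2*J+1 := le_trans (by exact_mod_cast hjh) hh
    rw [abs_le]
    constructor <;> push_cast <;> omega
  -- per-factor bound on the logarithm
  have key : ∀ n : ℕ, 1 ≤ n → (n : ℤ) ≤ 2*J+1 →
      0 ≤ Real.log (Nseq ε₀ A N ((n : ℤ) - J) / Ntil ε₀ A N (n-1)) ∧
      Real.log (Nseq ε₀ A N ((n : ℤ) - J) / Ntil ε₀ A N (n-1)) ≤
        (1 - ε₀) ^ (|(n : ℤ) - J - 1|) * L := by
    intro n hn1 hn2
    have hJ10 : (10:ℤ) ≤ J := hJ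
    by_cases hone : n = 1
    · subst hone
      have hNt : Ntil ε₀ A N 0 = 1 := by simp [Ntil]
      simp only [Nat.sub_self, hNt, div_one, Nat.cast_one]
      rw [log_Nseq ε₀ A hN0, if_pos (by omega : (1:ℤ) - J ≤ 1)]
      have he : (1:ℤ) - (1 - J) = J := by ring
      rw [he]
      have habs : |(1:ℤ) - J - 1| = J := by
        rw [show (1:ℤ) - J - 1 = -J by ring, abs_neg, abs_of_nonneg (by omega : (0:ℤ) ≤ J)]
      rw [habs, ← hLd]
      constructor
      · exact mul_nonneg (div_nonneg (zpow_pos h1ε J).le (by linarith)) hL0.le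
      · exact mul_le_mul_of_nonneg_right (div_le_self (zpow_pos h1ε J).le h2ε) hL0.le
    · have hn2' : 2 ≤ n := by omega
      have hNt : Ntil ε₀ A N (n-1) = Nseq ε₀ A N ((n : ℤ) - 1 - J) := by
        unfold Ntil
        rw [if_neg (by omega)]
        have hcast : ((n - 1 : ℕ) : ℤ) = (n : ℤ) - 1 := by omega
        rw [hcast, hJd]
      rw [hNt, Real.log_div (ne_of_gt (Nseq_pos ε₀ A hN0 _)) (ne_of_gt (Nseq_pos ε₀ A hN0 _))]
      have hprevk : (n : ℤ) - 1 - J = ((n : ℤ) - J) - 1 := by ring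
      set k : ℤ := (n : ℤ) - J with hkd
      rw [hprevk]
      have hkub : k ≤ J + 1 := by omega
      by_cases hk1 : k ≤ 1
      · -- both first branch
        rw [log_Nseq ε₀ A hN0, log_Nseq ε₀ A hN0, if_pos hk1, if_pos (by omega : k - 1 ≤ 1)]
        have hz : (1 - ε₀) ^ (1 - (k - 1)) = (1 - ε₀) ^ (1 - k) * (1 - ε₀) := by
          rw [show (1:ℤ) - (k - 1) = (1 - k) + 1 by ring, zpow_add₀ h1εne, zpow_one]
        have habs : |k - 1| = 1 - k := by rw [abs_of_nonpos (by omega)]; ring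
        rw [habs, ← hLd, hz]
        have hdiff : (1 - ε₀) ^ (1 - k) / (2 - ε₀) * L -
            (1 - ε₀) ^ (1 - k) * (1 - ε₀) / (2 - ε₀) * L =
            ((1 - ε₀) ^ (1 - k) * L) * (ε₀ / (2 - ε₀)) := by
          field_simp
          ring
        rw [hdiff]
        have hPL : 0 ≤ (1 - ε₀) ^ (1 - k) * L := mul_nonneg (zpow_pos h1ε _).le hL0.le
        have hr1 : ε₀ / (2 - ε₀) ≤ 1 := (div_le_one (by linarith)).mpr (by linarith)
        constructor
        · exact mul_nonneg hPL (by positivity)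
        · calc ((1 - ε₀) ^ (1 - k) * L) * (ε₀ / (2 - ε₀)) ≤ ((1 - ε₀) ^ (1 - k) * L) * 1 :=
              mul_le_mul_of_nonneg_left hr1 hPL
            _ = (1 - ε₀) ^ (1 - k) * L := mul_one _
      · -- k ≥ 2
        have hk2 : 2 ≤ k := by omega
        have hprev : Real.log (Nseq ε₀ A N (k - 1)) = (1 - (1 - ε₀) ^ (k-1) / (2 - ε₀)) * L := by
          rw [log_Nseq ε₀ A hN0, ← hLd, ← hJd]
          by_cases hk21 : k - 1 ≤ 1
          · rw [if_pos hk21]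
            have hke : k - 1 = 1 := by omega
            rw [show (1:ℤ) - (k-1) = 0 by omega, hke, zpow_zero, zpow_one]
            have : (1:ℝ) / (2 - ε₀) = 1 - (1 - ε₀) / (2 - ε₀) := by
              field_simp
              norm_num
            rw [this]
          · rw [if_neg hk21, if_pos (by omega : k - 1 ≤ J)]
        rw [hprev]
        have habs : |k - 1| = k - 1 := abs_of_nonneg (by omega)
        rw [habs]
        by_cases hkJ : k ≤ J
        · -- middle case
          rw [log_Nseq ε₀ A hN0, ← hLd, ← hJd, if_neg hk1, if_pos hkJ]
          have hz : (1 - ε₀) ^ k = (1 - ε₀) ^ (k - 1) * (1 - ε₀) := by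
            rw [zpow_sub_one₀ h1εne, mul_assoc, inv_mul_cancel₀ h1εne, mul_one]
          have hdiff : (1 - (1 - ε₀) ^ k / (2 - ε₀)) * L - (1 - (1 - ε₀) ^ (k-1) / (2 - ε₀)) * L =
              ((1 - ε₀) ^ (k - 1) * L) * (ε₀ / (2 - ε₀)) := by
            rw [hz]
            field_simp
            ring
          rw [hdiff]
          have hPL : 0 ≤ (1 - ε₀) ^ (k - 1) * L := mul_nonneg (zpow_pos h1ε _).le hL0.le
          have hr1 : ε₀ / (2 - ε₀) ≤ 1 := (div_le_one (by linarith)).mpr (by linarith)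
          constructor
          · exact mul_nonneg hPL (by positivity)
          · calc ((1 - ε₀) ^ (k - 1) * L) * (ε₀ / (2 - ε₀)) ≤ ((1 - ε₀) ^ (k - 1) * L) * 1 :=
                mul_le_mul_of_nonneg_left hr1 hPL
              _ = (1 - ε₀) ^ (k - 1) * L := mul_one _
        · -- k = J + 1
          rw [log_Nseq ε₀ A hN0, ← hLd, ← hJd, if_neg hk1, if_neg hkJ, one_mul]
          have hdiff : L - (1 - (1 - ε₀) ^ (k-1) / (2 - ε₀)) * L =
              ((1 - ε₀) ^ (k - 1) * L) * (1 / (2 - ε₀)) := by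
            field_simp
            ring
          rw [hdiff]
          have hPL : 0 ≤ (1 - ε₀) ^ (k - 1) * L := mul_nonneg (zpow_pos h1ε _).le hL0.le
          have hr1 : 1 / (2 - ε₀) ≤ 1 := by
            rw [div_le_one (by linarith)]; linarith
          constructor
          · exact mul_nonneg hPL (by positivity)
          · calc ((1 - ε₀) ^ (k - 1) * L) * (1 / (2 - ε₀)) ≤ ((1 - ε₀) ^ (k - 1) * L) * 1 :=
                mul_le_mul_of_nonneg_left hr1 hPL
              _ = (1 - ε₀) ^ (k - 1) * L := mul_one _
  -- the base B
  set B : ℝ := (1 - ε₀) ^ (j0 ε₀ A N j h) * L with hBd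
  have hBge : (10 * A) ^ 4 / ε₀ ^ 2 ≤ B := by
    refine le_trans hB ?_
    exact mul_le_mul_of_nonneg_right
      (zpow_le_zpow_right_of_le_one₀ h1ε h1ε1.le hj0J) hL0.le
  have hBpos : 0 < B := lt_of_lt_of_le (by positivity) hBge
  have hB34 : (2:ℝ)^9 * A^3 ≤ B ^ (3/4 : ℝ) := by
    have hApos : (0:ℝ) < A := by linarith
    have e1 : (((10*A)^4 : ℝ)) ^ (3/4 : ℝ) = (10*A)^3 := by
      rw [← Real.rpow_natCast (10*A) 4, ← Real.rpow_mul hA0.le, ← Real.rpow_natCast (10*A) 3]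
      norm_num
    have h2 : ((10*A)^4 : ℝ) ≤ B := by
      refine le_trans ?_ hBge
      rw [le_div_iff₀ (by positivity)]
      have h3 : 0 ≤ (10*A)^4 * (1 - ε₀^2) :=
        mul_nonneg (pow_pos hA0 4).le (by nlinarith)
      nlinarith [h3]
    have hA3 : (0:ℝ) ≤ A^3 := by positivity
    calc (2:ℝ)^9 * A^3 ≤ (10*A)^3 := by rw [mul_pow]; nlinarith [hA3]
      _ = (((10*A)^4 : ℝ)) ^ (3/4 : ℝ) := e1.symm
      _ ≤ B ^ (3/4 : ℝ) := Real.rpow_le_rpow (by positivity) h2 (by norm_num)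
  have hstep : (2:ℝ)^9 * A^3 * B ≤ B ^ (7/4 : ℝ) := by
    calc (2:ℝ)^9 * A^3 * B ≤ B ^ (3/4 : ℝ) * B := mul_le_mul_of_nonneg_right hB34 hBpos.le
      _ = B ^ (7/4 : ℝ) := by
          rw [show (7/4 : ℝ) = 3/4 + 1 by norm_num, Real.rpow_add hBpos, Real.rpow_one]
  -- factor-wise bound
  have hfac : ∀ n ∈ Finset.Icc (j+1) h,
      2^9 * A^3 * Real.log (Nseq ε₀ A N ((n : ℤ) - J) / Ntil ε₀ A N (n-1)) ≤ B ^ (7/4 : ℝ) := by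
    intro n hn
    obtain ⟨hna, hnb⟩ := Finset.mem_Icc.mp hn
    have hn1 : 1 ≤ n := by omega
    have hn2 : (n : ℤ) ≤ 2*J+1 := le_trans (by exact_mod_cast hnb) hh
    obtain ⟨_, hub⟩ := key n hn1 hn2
    have hmono : (1 - ε₀) ^ (|(n : ℤ) - J - 1|) * L ≤ B := by
      rw [hBd]
      exact mul_le_mul_of_nonneg_right
        (zpow_le_zpow_right_of_le_one₀ h1ε h1ε1.le (hj0le n hna hnb)) hL0.le
    have hc : (0:ℝ) ≤ 2^9 * A^3 := by positivity
    calc 2^9 * A^3 * Real.log (Nseq ε₀ A N ((n : ℤ) - J) / Ntil ε₀ A N (n-1))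
        ≤ 2^9 * A^3 * B := mul_le_mul_of_nonneg_left (le_trans hub hmono) hc
      _ ≤ B ^ (7/4 : ℝ) := hstep
  have hfac0 : ∀ n ∈ Finset.Icc (j+1) h,
      0 ≤ 2^9 * A^3 * Real.log (Nseq ε₀ A N ((n : ℤ) - J) / Ntil ε₀ A N (n-1)) := by
    intro n hn
    obtain ⟨hna, hnb⟩ := Finset.mem_Icc.mp hn
    have hn1 : 1 ≤ n := by omega
    have hn2 : (n : ℤ) ≤ 2*J+1 := le_trans (by exact_mod_cast hnb) hh
    exact mul_nonneg (by positivity) (key n hn1 hn2).1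
  calc ∏ n ∈ Finset.Icc (j+1) h,
        (2^9 * A^3 * Real.log (Nseq ε₀ A N ((n : ℤ) - J) / Ntil ε₀ A N (n-1)))
      ≤ ∏ _n ∈ Finset.Icc (j+1) h, B ^ (7/4 : ℝ) := Finset.prod_le_prod hfac0 hfac
    _ = (B ^ (7/4 : ℝ)) ^ ((Finset.Icc (j+1) h).card) := Finset.prod_const _
    _ = B ^ ((7/4 : ℝ) * ((h : ℝ) - (j : ℝ))) := by
        rw [Nat.card_Icc, show h + 1 - (j+1) = h - j from by omega,
          ← Real.rpow_natCast (B ^ (7/4 : ℝ)) (h-j), ← Real.rpow_mul hBpos.le]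
        congr 1
        have : ((h - j : ℕ) : ℝ) = (h : ℝ) - (j : ℝ) := by
          push_cast [Nat.cast_sub hjh.le]
          ring
        rw [this]
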